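/- Let (Y, A, X) be a recollement of abelian categories, and let Λ be a small category. If A has exact Λ-limits, then Y and X have exact Λ-limits. -/

import Mathlib

open CategoryTheory Limits

universe v u u₁ u₂ u₃

/-- A recollement of categories: adjoint triples `(i^*, i_*, i^!)` and `(j_!, j^*, j_*)`,
with `i_*`, `j_!`, `j_*` fully faithful and the essential image of `i_*` equal to the
kernel of `j^*`. -/
structure Recollement (Y : Type u₁) (A : Type u₂) (X : Type u₃)
    [Category.{v} Y] [Category.{v} A] [Category.{v} X] where
  /-- `i_* : Y ⥤ A` -/
  iStar : Y ⥤ A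
  /-- `i^* : A ⥤ Y` -/
  iUp : A ⥤ Y
  /-- `i^! : A ⥤ Y` -/
  iShriek : A ⥤ Y
  /-- `j^* : A ⥤ X` -/
  jUp : A ⥤ X
  /-- `j_! : X ⥤ A` -/
  jLower : X ⥤ A
  /-- `j_* : X ⥤ A` -/
  jRight : X ⥤ A
  adj_i₁ : iUp ⊣ iStar
  adj_i₂ : iStar ⊣ iShriek
  adj_j₁ : jLower ⊣ jUp
  adj_j₂ : jUp ⊣ jRight
  iStar_full : iStar.Full
  iStar_faithful : iStar.Faithful
  jLower_full : jLower.Full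
  jLower_faithful : jLower.Faithful
  jRight_full : jRight.Full
  jRight_faithful : jRight.Faithful
  essImage_iff : ∀ M : A, iStar.essImage M ↔ IsZero (jUp.obj M)

variable {Y : Type u₁} {A : Type u₂} {X : Type u₃}
  [Category.{v} Y] [Category.{v} A] [Category.{v} X]

/-- The class `C = Ker i^*` of the TTF triple associated to a recollement. -/
def Recollement.C (R : Recollement Y A X) : A → Prop := fun M => IsZero (R.iUp.obj M)

/-- The class `T = Im i_*` of the TTF triple associated to a recollement. -/
def Recollement.T (R : Recollement Y A X) : A → Prop := fun M => R.iStar.essImage M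

/-- The class `F = Ker i^!` of the TTF triple associated to a recollement. -/
def Recollement.F (R : Recollement Y A X) : A → Prop := fun M => IsZero (R.iShriek.obj M)

/-- An (additive) functor between abelian categories is exact if it preserves finite
limits and finite colimits. -/
def IsExactFunctor {C D : Type*} [Category C] [Category D] (G : C ⥤ D) : Prop :=
  Nonempty (PreservesFiniteLimits G) ∧ Nonempty (PreservesFiniteColimits G)

/-- An abelian category has exact `Λ`-colimits if `Λ`-colimits exist and the colimit
functor `(Λ ⥤ C) ⥤ C` is exact (being a left adjoint it is automatically right exact,
so exactness amounts to preservation of finite limits). -/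
structure HasExactColimitsOfShape' (Λ : Type v) [SmallCategory Λ]
    (C : Type u) [Category.{v} C] [Abelian C] : Prop where
  hasColimitsOfShape : HasColimitsOfShape Λ C
  exact' : letI := hasColimitsOfShape
    Nonempty (PreservesFiniteLimits (colim (J := Λ) (C := C)))

/-- An abelian category has exact `Λ`-limits if `Λ`-limits exist and the limit functor
`(Λ ⥤ C) ⥤ C` is exact (being a right adjoint it is automatically left exact, so
exactness amounts to preservation of finite colimits). -/
structure HasExactLimitsOfShape' (Λ : Type v) [SmallCategory Λ]
    (C : Type u) [Category.{v} C] [Abelian C] : Prop where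
  hasLimitsOfShape : HasLimitsOfShape Λ C
  exact' : letI := hasLimitsOfShape
    Nonempty (PreservesFiniteColimits (lim (J := Λ) (C := C)))

/-- In a recollement of abelian categories, if the middle term has exact `Λ`-limits,
then so do the outer terms. -/
theorem recollement_hasExactLimitsOfShape [Abelian Y] [Abelian A] [Abelian X]
    (R : Recollement Y A X) (Λ : Type v) [SmallCategory Λ]
    (hA : HasExactLimitsOfShape' Λ A) :
    HasExactLimitsOfShape' Λ Y ∧ HasExactLimitsOfShape' Λ X := by
  letI := hA.hasLimitsOfShape
  obtain ⟨hlimA⟩ := hA.exact'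
  letI := R.iStar_full; letI := R.iStar_faithful
  letI := R.jRight_full; letI := R.jRight_faithful
  letI := R.jLower_full; letI := R.jLower_faithful
  letI : Reflective R.iStar := { L := R.iUp, adj := R.adj_i₁ }
  letI : Reflective R.jRight := { L := R.jUp, adj := R.adj_j₂ }
  letI hY : HasLimitsOfShape Λ Y := hasLimitsOfShape_of_reflective R.iStar
  letI hX : HasLimitsOfShape Λ X := hasLimitsOfShape_of_reflective R.jRight
  letI : PreservesLimitsOfSize.{v, v} R.iStar := R.adj_i₁.rightAdjoint_preservesLimits
  letI : PreservesColimitsOfSize.{0, 0} R.iStar := R.adj_i₂.leftAdjoint_preservesColimits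
  letI : PreservesColimitsOfSize.{0, 0} R.iUp := R.adj_i₁.leftAdjoint_preservesColimits
  letI : PreservesLimitsOfSize.{v, v} R.jUp := R.adj_j₁.rightAdjoint_preservesLimits
  letI : PreservesColimitsOfSize.{0, 0} R.jUp := R.adj_j₂.leftAdjoint_preservesColimits
  letI : PreservesColimitsOfSize.{0, 0} R.jLower := R.adj_j₁.leftAdjoint_preservesColimits
  letI : PreservesFiniteColimits ((Functor.whiskeringRight Λ Y A).obj R.iStar) :=
    ⟨fun _ _ _ => inferInstance⟩
  letI : PreservesFiniteColimits ((Functor.whiskeringRight Λ X A).obj R.jLower) :=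
    ⟨fun _ _ _ => inferInstance⟩
  constructor
  · refine ⟨hY, ?_⟩
    have eY : (lim : (Λ ⥤ Y) ⥤ Y) ≅ (Functor.whiskeringRight Λ Y A).obj R.iStar ⋙ lim ⋙ R.iUp :=
      (Functor.rightUnitor _).symm ≪≫ Functor.isoWhiskerLeft lim (asIso R.adj_i₁.counit).symm ≪≫
        (Functor.associator _ _ _).symm ≪≫
        Functor.isoWhiskerRight (preservesLimitNatIso R.iStar) R.iUp ≪≫ Functor.associator _ _ _
    letI : PreservesFiniteColimits ((lim : (Λ ⥤ A) ⥤ A) ⋙ R.iUp) :=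
      comp_preservesFiniteColimits _ _
    letI : PreservesFiniteColimits
        ((Functor.whiskeringRight Λ Y A).obj R.iStar ⋙ (lim : (Λ ⥤ A) ⥤ A) ⋙ R.iUp) :=
      comp_preservesFiniteColimits _ _
    exact ⟨preservesFiniteColimits_of_natIso eY.symm⟩
  · refine ⟨hX, ?_⟩
    have eX : (Functor.whiskeringRight Λ X A).obj R.jLower ⋙ lim ⋙ R.jUp ≅ (lim : (Λ ⥤ X) ⥤ X) :=
      Functor.isoWhiskerLeft _ (preservesLimitNatIso R.jUp) ≪≫ (Functor.associator _ _ _).symm ≪≫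
        Functor.isoWhiskerRight ((Functor.whiskeringRightObjCompIso R.jLower R.jUp) ≪≫
          (Functor.whiskeringRight Λ X X).mapIso (asIso R.adj_j₁.unit).symm) lim ≪≫
        Functor.isoWhiskerRight (Functor.whiskeringRightObjIdIso) lim ≪≫ Functor.leftUnitor _
    letI : PreservesFiniteColimits ((lim : (Λ ⥤ A) ⥤ A) ⋙ R.jUp) :=
      comp_preservesFiniteColimits _ _
    letI : PreservesFiniteColimits
        ((Functor.whiskeringRight Λ X A).obj R.jLower ⋙ (lim : (Λ ⥤ A) ⥤ A) ⋙ R.jUp) :=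
      comp_preservesFiniteColimits _ _
    exact ⟨preservesFiniteColimits_of_natIso eX⟩
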